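/- Let d ≥ 1, λ > 0, C_h ≥ 0, β ≥ 0. Let Σ be a symmetric real d×d matrix satisfying xᵀΣx ≥ λ‖x‖₂² for all x ∈ ℝ^d (so Σ is positive definite). Let ŵ ∈ ℝ^d and define Ball = {w ∈ ℝ^d : (w-ŵ)ᵀΣ(w-ŵ) ≤ β}. Let X be a nonempty set and let f : X × ℝ^d → ℝ be such that for every x ∈ X the map w ↦ f(x,w) is twice continuously differentiable with ‖∇²_w f(x,w)‖_op ≤ C_h for all w ∈ ℝ^d. Suppose w* ∈ Ball, x* ∈ X, x_t ∈ X, and there exists w̃ ∈ Ball with f(x_t, w̃) ≥ f(x*, w*). Then f(x*, w*) − f(x_t, w*) ≤ 2√β · ‖∇_w f(x_t, ŵ)‖_{Σ^{-1}} + 2βC_h/λ. -/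

import Mathlib

open Matrix

lemma dot_self_nonneg' {d : ℕ} (u : Fin d → ℝ) : (0:ℝ) ≤ u ⬝ᵥ u :=
  Finset.sum_nonneg fun i _ => mul_self_nonneg _

lemma taylor_aux {d : ℕ} {Ch : ℝ} (hCh : 0 ≤ Ch) (F : (Fin d → ℝ) → ℝ)
    (hF : ContDiff ℝ 2 F)
    (hhess : ∀ w u v, |fderiv ℝ (fderiv ℝ F) w u v| ≤ Ch * Real.sqrt (u ⬝ᵥ u) * Real.sqrt (v ⬝ᵥ v))
    (what w : Fin d → ℝ) :
    |F w - F what - fderiv ℝ F what (w - what)| ≤ Ch * ((w - what) ⬝ᵥ (w - what)) := by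
  set u : Fin d → ℝ := w - what with hu
  set γ : ℝ → (Fin d → ℝ) := fun s => what + s • u with hγdef
  have hγ : ∀ s : ℝ, HasDerivAt γ u s := by
    intro s
    have h := ((hasDerivAt_id s).smul_const u).const_add what
    rw [one_smul] at h
    exact h
  have hdiff : Differentiable ℝ F := hF.differentiable (by norm_num)
  have hdF : ContDiff ℝ 1 (fderiv ℝ F) := hF.fderiv_right (by norm_num)
  have hdFdiff : Differentiable ℝ (fderiv ℝ F) := hdF.differentiable one_ne_zero
  set ψ : ℝ → ℝ := fun s => fderiv ℝ F (γ s) u with hψdef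
  have hφ : ∀ s : ℝ, HasDerivAt (fun s => F (γ s)) (ψ s) s := fun s =>
    ((hdiff (γ s)).hasFDerivAt).comp_hasDerivAt s (hγ s)
  have hψ : ∀ s : ℝ, HasDerivAt ψ (fderiv ℝ (fderiv ℝ F) (γ s) u u) s := by
    intro s
    have h1 : HasDerivAt (fun s => fderiv ℝ F (γ s)) (fderiv ℝ (fderiv ℝ F) (γ s) u) s :=
      ((hdFdiff (γ s)).hasFDerivAt).comp_hasDerivAt s (hγ s)
    exact (ContinuousLinearMap.apply ℝ ℝ u).hasFDerivAt.comp_hasDerivAt s h1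
  have hbnd : ∀ s : ℝ, |fderiv ℝ (fderiv ℝ F) (γ s) u u| ≤ Ch * (u ⬝ᵥ u) := by
    intro s
    calc |fderiv ℝ (fderiv ℝ F) (γ s) u u| ≤ Ch * Real.sqrt (u ⬝ᵥ u) * Real.sqrt (u ⬝ᵥ u) :=
          hhess _ _ _
      _ = Ch * (u ⬝ᵥ u) := by rw [mul_assoc, Real.mul_self_sqrt (dot_self_nonneg' u)]
  -- ψ is Lipschitz with constant Ch * (u⬝ᵥu)
  have hψlip : ∀ s ∈ Set.Icc (0:ℝ) 1, |ψ s - ψ 0| ≤ Ch * (u ⬝ᵥ u) := by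
    intro s hs
    have := Convex.norm_image_sub_le_of_norm_hasDerivWithin_le
      (f := ψ) (f' := fun s => fderiv ℝ (fderiv ℝ F) (γ s) u u)
      (s := Set.univ) (C := Ch * (u ⬝ᵥ u))
      (fun x _ => (hψ x).hasDerivWithinAt)
      (fun x _ => by simpa [Real.norm_eq_abs] using hbnd x)
      convex_univ (Set.mem_univ 0) (Set.mem_univ s)
    have h1 : ‖s - 0‖ ≤ 1 := by
      rw [Real.norm_eq_abs, sub_zero, abs_of_nonneg hs.1]; exact hs.2
    calc |ψ s - ψ 0| ≤ Ch * (u ⬝ᵥ u) * ‖s - 0‖ := by simpa [Real.norm_eq_abs] using this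
      _ ≤ Ch * (u ⬝ᵥ u) * 1 :=
          mul_le_mul_of_nonneg_left h1 (mul_nonneg hCh (dot_self_nonneg' u))
      _ = Ch * (u ⬝ᵥ u) := mul_one _
  set χ : ℝ → ℝ := fun s => F (γ s) - s * ψ 0 with hχdef
  have hχ : ∀ s : ℝ, HasDerivAt χ (ψ s - ψ 0) s := fun s =>
    (hφ s).sub (hasDerivAt_mul_const (ψ 0))
  have hmain := Convex.norm_image_sub_le_of_norm_hasDerivWithin_le
      (f := χ) (f' := fun s => ψ s - ψ 0) (s := Set.Icc (0:ℝ) 1) (C := Ch * (u ⬝ᵥ u))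
      (fun x _ => (hχ x).hasDerivWithinAt)
      (fun x hx => by simpa [Real.norm_eq_abs] using hψlip x hx)
      (convex_Icc 0 1) (Set.left_mem_Icc.mpr zero_le_one) (Set.right_mem_Icc.mpr zero_le_one)
  have hγ0 : γ 0 = what := by simp [hγdef]
  have hγ1 : γ 1 = w := by simp [hγdef, hu]
  have hχ1 : χ 1 - χ 0 = F w - F what - fderiv ℝ F what u := by
    simp [hχdef, hψdef, hγ0, hγ1]; ring
  calc |F w - F what - fderiv ℝ F what u| = ‖χ 1 - χ 0‖ := by rw [hχ1, Real.norm_eq_abs]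
    _ ≤ Ch * (u ⬝ᵥ u) * ‖(1:ℝ) - 0‖ := hmain
    _ = Ch * (u ⬝ᵥ u) := by norm_num

lemma dot_self_nonneg'' {d : ℕ} (u : Fin d → ℝ) : (0:ℝ) ≤ u ⬝ᵥ u :=
  Finset.sum_nonneg fun _ _ => mul_self_nonneg _

lemma sym_dot {d : ℕ} {S : Matrix (Fin d) (Fin d) ℝ} (hS : S.IsSymm)
    (u v : Fin d → ℝ) : u ⬝ᵥ (S *ᵥ v) = v ⬝ᵥ (S *ᵥ u) := by
  rw [Matrix.dotProduct_mulVec, ← Matrix.mulVec_transpose, hS.eq, dotProduct_comm]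

lemma cs_aux {d : ℕ} {S : Matrix (Fin d) (Fin d) ℝ} (hS : S.IsSymm)
    (hpos : ∀ x : Fin d → ℝ, 0 ≤ x ⬝ᵥ (S *ᵥ x)) (a b : Fin d → ℝ) :
    (a ⬝ᵥ (S *ᵥ b))^2 ≤ (a ⬝ᵥ (S *ᵥ a)) * (b ⬝ᵥ (S *ᵥ b)) := by
  have hquad : ∀ t : ℝ,
      0 ≤ (b ⬝ᵥ (S *ᵥ b)) * (t * t) + (2 * (a ⬝ᵥ (S *ᵥ b))) * t + (a ⬝ᵥ (S *ᵥ a)) := by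
    intro t
    have h := hpos (a + t • b)
    have hexp : (a + t • b) ⬝ᵥ (S *ᵥ (a + t • b)) =
        (b ⬝ᵥ (S *ᵥ b)) * (t * t) + (2 * (a ⬝ᵥ (S *ᵥ b))) * t + (a ⬝ᵥ (S *ᵥ a)) := by
      rw [Matrix.mulVec_add, Matrix.mulVec_smul, add_dotProduct,
        dotProduct_add, dotProduct_add, smul_dotProduct,
        dotProduct_smul, dotProduct_smul, sym_dot hS b a]
      simp only [smul_dotProduct, dotProduct_smul, smul_eq_mul]
      ring
    linarith [hexp ▸ h]
  have hd := discrim_le_zero hquad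
  rw [discrim] at hd
  nlinarith [hd]

lemma lin_rep {d : ℕ} (L : (Fin d → ℝ) →L[ℝ] ℝ) (u : Fin d → ℝ) :
    L u = (fun i => L (Pi.single i 1)) ⬝ᵥ u := by
  have hu : u = ∑ i, (u i) • (Pi.single i 1 : Fin d → ℝ) := by
    conv_lhs => rw [← Finset.univ_sum_single u]
    congr 1; ext i j
    simp [Pi.single_apply, mul_comm]
  have h2 : L u = ∑ i, u i * L (Pi.single i 1) := by
    conv_lhs => rw [hu]
    rw [map_sum]
    simp only [_root_.map_smul, smul_eq_mul]
  rw [h2, dotProduct]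
  exact Finset.sum_congr rfl fun i _ => mul_comm _ _

/-- Deterministic instantaneous-regret bound (Lemma 5.7): if `w*` lies in the
confidence ball `{w : (w-ŵ)ᵀΣ(w-ŵ) ≤ β}` and `(x_t, w̃)` is chosen optimistically
(`w̃` in the ball with `f(x_t,w̃) ≥ f(x*,w*)`), then
`f(x*,w*) − f(x_t,w*) ≤ 2√β ‖∇_w f(x_t,ŵ)‖_{Σ⁻¹} + 2βC_h/λ`. -/
theorem instantaneous_regret_bound
    (d : ℕ) (hd : 1 ≤ d) (lam Ch β : ℝ) (hlam : 0 < lam) (hCh : 0 ≤ Ch) (hβ : 0 ≤ β)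
    (S : Matrix (Fin d) (Fin d) ℝ) (hSsymm : S.IsSymm)
    (hSlow : ∀ x : Fin d → ℝ, lam * (x ⬝ᵥ x) ≤ x ⬝ᵥ (S *ᵥ x))
    (what : Fin d → ℝ)
    (X : Type*) (hX : Nonempty X)
    (f : X → (Fin d → ℝ) → ℝ)
    (hsmooth : ∀ x, ContDiff ℝ 2 (f x))
    (hhess : ∀ (x : X) (w u v : Fin d → ℝ),
      |fderiv ℝ (fderiv ℝ (f x)) w u v| ≤ Ch * Real.sqrt (u ⬝ᵥ u) * Real.sqrt (v ⬝ᵥ v))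
    (wstar : Fin d → ℝ) (hwstar : (wstar - what) ⬝ᵥ (S *ᵥ (wstar - what)) ≤ β)
    (xstar xt : X)
    (wtil : Fin d → ℝ) (hwtil : (wtil - what) ⬝ᵥ (S *ᵥ (wtil - what)) ≤ β)
    (hopt : f xstar wstar ≤ f xt wtil) :
    f xstar wstar - f xt wstar ≤
      2 * Real.sqrt β *
        Real.sqrt ((fun i => fderiv ℝ (f xt) what (Pi.single i 1)) ⬝ᵥ
          (S⁻¹ *ᵥ fun i => fderiv ℝ (f xt) what (Pi.single i 1))) +
      2 * β * Ch / lam := by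
  have hdet : IsUnit S.det := by
    rw [← Matrix.isUnit_iff_isUnit_det, ← Matrix.mulVec_injective_iff_isUnit]
    intro x y hxy
    have h0 : S *ᵥ (x - y) = 0 := by rw [Matrix.mulVec_sub, hxy, sub_self]
    have h1 := hSlow (x - y)
    rw [h0, dotProduct_zero] at h1
    have h2 : (x - y) ⬝ᵥ (x - y) ≤ 0 := nonpos_of_mul_nonpos_right ?hside hlam
    case hside => nlinarith [h1]
    have h3 : (x - y) ⬝ᵥ (x - y) = 0 := le_antisymm h2 (dot_self_nonneg'' _)
    exact sub_eq_zero.mp (dotProduct_self_eq_zero.mp h3)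
  set G : Fin d → ℝ := fun i => fderiv ℝ (f xt) what (Pi.single i 1) with hGdef
  set N2 : ℝ := G ⬝ᵥ (S⁻¹ *ᵥ G) with hN2
  have hpos : ∀ x : Fin d → ℝ, 0 ≤ x ⬝ᵥ (S *ᵥ x) := fun x =>
    le_trans (mul_nonneg hlam.le (dot_self_nonneg'' x)) (hSlow x)
  have hSa : S *ᵥ (S⁻¹ *ᵥ G) = G := by
    rw [Matrix.mulVec_mulVec, Matrix.mul_nonsing_inv S hdet, Matrix.one_mulVec]
  have hN2nonneg : 0 ≤ N2 := by
    have h := hpos (S⁻¹ *ᵥ G)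
    rwa [hSa, dotProduct_comm, ← hN2] at h
  have hkey : ∀ u : Fin d → ℝ, u ⬝ᵥ (S *ᵥ u) ≤ β →
      |G ⬝ᵥ u| ≤ Real.sqrt β * Real.sqrt N2 := by
    intro u hub
    have hcs := cs_aux hSsymm hpos (S⁻¹ *ᵥ G) u
    have e1 : (S⁻¹ *ᵥ G) ⬝ᵥ (S *ᵥ u) = G ⬝ᵥ u := by
      rw [sym_dot hSsymm, hSa]; exact dotProduct_comm u G
    have e2 : (S⁻¹ *ᵥ G) ⬝ᵥ (S *ᵥ (S⁻¹ *ᵥ G)) = N2 := by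
      rw [hSa]; exact dotProduct_comm _ G
    rw [e1, e2] at hcs
    have h3 : (G ⬝ᵥ u)^2 ≤ N2 * β := le_trans hcs (mul_le_mul_of_nonneg_left hub hN2nonneg)
    calc |G ⬝ᵥ u| = Real.sqrt ((G ⬝ᵥ u)^2) := (Real.sqrt_sq_eq_abs _).symm
      _ ≤ Real.sqrt (N2 * β) := Real.sqrt_le_sqrt h3
      _ = Real.sqrt β * Real.sqrt N2 := by rw [Real.sqrt_mul hN2nonneg, mul_comm]
  have hballdot : ∀ u : Fin d → ℝ, u ⬝ᵥ (S *ᵥ u) ≤ β → u ⬝ᵥ u ≤ β / lam := by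
    intro u hub
    rw [le_div_iff₀ hlam]
    nlinarith [hSlow u]
  have hT1 := taylor_aux hCh (f xt) (hsmooth xt) (hhess xt) what wtil
  have hT2 := taylor_aux hCh (f xt) (hsmooth xt) (hhess xt) what wstar
  have hL1 : fderiv ℝ (f xt) what (wtil - what) = G ⬝ᵥ (wtil - what) :=
    lin_rep (fderiv ℝ (f xt) what) (wtil - what)
  have hL2 : fderiv ℝ (f xt) what (wstar - what) = G ⬝ᵥ (wstar - what) :=
    lin_rep (fderiv ℝ (f xt) what) (wstar - what)
  rw [hL1] at hT1
  rw [hL2] at hT2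
  have hb1 := abs_le.mp (hkey _ hwtil)
  have hb2 := abs_le.mp (hkey _ hwstar)
  have hc1 : Ch * ((wtil - what) ⬝ᵥ (wtil - what)) ≤ Ch * (β / lam) :=
    mul_le_mul_of_nonneg_left (hballdot _ hwtil) hCh
  have hc2 : Ch * ((wstar - what) ⬝ᵥ (wstar - what)) ≤ Ch * (β / lam) :=
    mul_le_mul_of_nonneg_left (hballdot _ hwstar) hCh
  have ha1 := abs_le.mp hT1
  have ha2 := abs_le.mp hT2
  have hdiv : 2 * β * Ch / lam = Ch * (β / lam) + Ch * (β / lam) := by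
    field_simp; ring
  rw [hdiv]
  have h1 : f xt wtil - f xt what - G ⬝ᵥ (wtil - what) ≤ Ch * (β / lam) :=
    le_trans ha1.2 hc1
  have h2 : -(Ch * (β / lam)) ≤ f xt wstar - f xt what - G ⬝ᵥ (wstar - what) :=
    le_trans (neg_le_neg hc2) ha2.1
  have h3 : G ⬝ᵥ (wtil - what) ≤ Real.sqrt β * Real.sqrt N2 := hb1.2
  have h4 : -(Real.sqrt β * Real.sqrt N2) ≤ G ⬝ᵥ (wstar - what) := hb2.1
  have hopt' : f xstar wstar - f xt wstar ≤ f xt wtil - f xt wstar := by linarith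
  linarith
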